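/- arXiv:2505.06043 — 6 statements merged into one kernel-verified Lean document; each statement's English description precedes it below -/
import Mathlib

section
/- Let p(x) = x^3 - a2*x^2 + a1*x - a0 with a0, a1, a2 > 0. Set α = min{a2, a0/a1} and β = max{a2, a0/a1}. Then p(x) < 0 for all x in (0, α) and p(x) > 0 for all x > β. -/
theorem cubic_sign (a0 a1 a2 : ℝ) (h0 : 0 < a0) (h1 : 0 < a1) (h2 : 0 < a2) :
    (∀ x : ℝ, 0 < x → x < min a2 (a0 / a1) →
      x ^ 3 - a2 * x ^ 2 + a1 * x - a0 < 0) ∧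
    (∀ x : ℝ, max a2 (a0 / a1) < x →
      0 < x ^ 3 - a2 * x ^ 2 + a1 * x - a0) := by
  have key : ∀ x : ℝ, x ^ 3 - a2 * x ^ 2 + a1 * x - a0
      = x ^ 2 * (x - a2) + a1 * (x - a0 / a1) := by
    intro x; field_simp; ring
  constructor
  · intro x hx hmin
    rw [key]
    have h2' : x < a2 := lt_of_lt_of_le hmin (min_le_left _ _)
    have h1' : x < a0 / a1 := lt_of_lt_of_le hmin (min_le_right _ _)
    have : x ^ 2 * (x - a2) ≤ 0 :=
      mul_nonpos_of_nonneg_of_nonpos (sq_nonneg x) (by linarith)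
    nlinarith
  · intro x hmax
    rw [key]
    have h2' : a2 < x := lt_of_le_of_lt (le_max_left _ _) hmax
    have h1' : a0 / a1 < x := lt_of_le_of_lt (le_max_right _ _) hmax
    have hx : 0 < x := h2.trans h2'
    nlinarith [sq_nonneg x]
end

section
/- Let γA, γS, γR, γD be real numbers with γA, γS, γR > 0, γD ≥ 0 and γS = γR + γD. Then the quadratic h(ζ) = ζ^2 - (γA + γS)ζ + γR + γD·γA has two real roots h- ≤ h+ satisfying h- ≥ γR/(γA + γR + γD) and h+ ≤ γA + γS. -/
theorem quadratic_root_bounds (γA γS γR γD : ℝ)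
    (hA : 0 < γA) (hS : 0 < γS) (hR : 0 < γR) (hD : 0 ≤ γD)
    (hsum : γS = γR + γD)
    (hdisc : 0 ≤ (γA + γS) ^ 2 - 4 * (γR + γD * γA)) :
    let hm := ((γA + γS) - Real.sqrt ((γA + γS) ^ 2 - 4 * (γR + γD * γA))) / 2
    let hp := ((γA + γS) + Real.sqrt ((γA + γS) ^ 2 - 4 * (γR + γD * γA))) / 2
    hm ≤ hp ∧
    hm ^ 2 - (γA + γS) * hm + (γR + γD * γA) = 0 ∧
    hp ^ 2 - (γA + γS) * hp + (γR + γD * γA) = 0 ∧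
    γR / (γA + γR + γD) ≤ hm ∧
    hp ≤ γA + γS := by
  intro hm hp
  have hs : 0 < γA + γS := by linarith
  have hc : (0:ℝ) ≤ γR + γD * γA := by positivity
  set d := Real.sqrt ((γA + γS) ^ 2 - 4 * (γR + γD * γA)) with hd
  have hnn : 0 ≤ d := Real.sqrt_nonneg _
  have hsq : d ^ 2 = (γA + γS) ^ 2 - 4 * (γR + γD * γA) := Real.sq_sqrt hdisc
  have hle : d ≤ γA + γS := by nlinarith [hsq, hnn, hc, hs]
  have h2R : 2 * γR ≤ (γA + γS) ^ 2 := by nlinarith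
  have hbnd : d ≤ (γA + γS) - 2 * γR / (γA + γS) := by
    have hnonneg : 0 ≤ (γA + γS) - 2 * γR / (γA + γS) := by
      rw [sub_nonneg, div_le_iff₀ hs]; nlinarith
    have hineq : (γA + γS) ^ 2 - 4 * (γR + γD * γA)
        ≤ ((γA + γS) - 2 * γR / (γA + γS)) ^ 2 := by
      have h1 : 0 ≤ γD * γA := by positivity
      have h2 : 0 ≤ (2 * γR / (γA + γS)) ^ 2 := by positivity
      have key : ((γA + γS) - 2 * γR / (γA + γS)) ^ 2
          = (γA + γS) ^ 2 - 4 * γR + (2 * γR / (γA + γS)) ^ 2 := by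
        field_simp; ring
      rw [key]; linarith
    calc d ≤ Real.sqrt (((γA + γS) - 2 * γR / (γA + γS)) ^ 2) :=
            Real.sqrt_le_sqrt hineq
      _ = (γA + γS) - 2 * γR / (γA + γS) := Real.sqrt_sq hnonneg
  refine ⟨by simp only [hm, hp]; linarith, ?_, ?_, ?_, ?_⟩
  · show (((γA + γS) - d) / 2) ^ 2 - (γA + γS) * (((γA + γS) - d) / 2)
      + (γR + γD * γA) = 0
    linear_combination hsq / 4
  · show (((γA + γS) + d) / 2) ^ 2 - (γA + γS) * (((γA + γS) + d) / 2)
      + (γR + γD * γA) = 0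
    linear_combination hsq / 4
  · show γR / (γA + γR + γD) ≤ ((γA + γS) - d) / 2
    have : γA + γR + γD = γA + γS := by linarith
    rw [this]
    have heq : γR / (γA + γS) = (2 * γR / (γA + γS)) / 2 := by ring
    rw [heq]; linarith
  · show ((γA + γS) + d) / 2 ≤ γA + γS
    linarith
end

section
/- Let γA, γD, γR > 0 with γA > 1 and γD < 1. Set γS = γR + γD. Then the negative root λ- of λ^2 - (γA - γD)λ - (γR + γA·γD) satisfies |λ-| ≥ γS/(γA + γS), i.e., λ- ≤ -γS/(γA + γS). -/
theorem neg_root_upper_bound (γA γD γR : ℝ)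
    (hA : 0 < γA) (hD : 0 < γD) (hR : 0 < γR)
    (hA1 : 1 < γA) (hD1 : γD < 1) (γS : ℝ) (hS : γS = γR + γD) :
    (γA - γD - Real.sqrt ((γA + γD) ^ 2 + 4 * γR)) / 2 ≤ -(γS / (γA + γS)) := by
  have hSpos : 0 < γS := by rw [hS]; linarith
  have hden : 0 < γA + γS := by linarith
  set c := γS / (γA + γS) with hc
  have hc0 : 0 < c := div_pos hSpos hden
  have hcval : c * (γA + γS) = γS := div_mul_cancel₀ _ (ne_of_gt hden)
  have hx : 0 ≤ (γA + γD) ^ 2 + 4 * γR := by positivity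
  have hs0 : 0 ≤ Real.sqrt ((γA + γD) ^ 2 + 4 * γR) := Real.sqrt_nonneg _
  have hkey : (γA - γD + 2 * c) ^ 2 ≤ (γA + γD) ^ 2 + 4 * γR := by
    have h1 : c * (γA - γD) + c ^ 2 ≤ γA * γD + γR := by
      have h2 : (c * (γA - γD) + c ^ 2) * (γA + γS) ^ 2 ≤ (γA * γD + γR) * (γA + γS) ^ 2 := by
        have e : (c * (γA - γD) + c ^ 2) * (γA + γS) ^ 2
            = γS * (γA - γD) * (γA + γS) + γS ^ 2 := by
          have : (c * (γA - γD) + c ^ 2) * (γA + γS) ^ 2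
              = (c * (γA + γS)) * ((γA - γD) * (γA + γS)) + (c * (γA + γS)) ^ 2 := by ring
          rw [this, hcval]; ring
        rw [e, hS]
        nlinarith [mul_nonneg (by linarith : (0:ℝ) ≤ γA - 1) (sq_nonneg γR),
          mul_nonneg (mul_nonneg (by linarith : (0:ℝ) ≤ γA - 1) hD.le) hR.le,
          mul_nonneg (mul_nonneg (sq_nonneg γA) hD.le) (by linarith : (0:ℝ) ≤ γA - 1),
          mul_nonneg (mul_nonneg (by nlinarith : (0:ℝ) ≤ γA ^ 2 - 1) hD.le) hR.le,
          mul_nonneg (by nlinarith : (0:ℝ) ≤ γA ^ 2 - 1) (sq_nonneg γD),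
          mul_nonneg hD.le hR.le, sq_nonneg γD,
          mul_nonneg (sq_nonneg (γR + γD))
            (by nlinarith : (0:ℝ) ≤ γA * γD + (γR + γD))]
      exact le_of_mul_le_mul_right h2 (by positivity)
    nlinarith
  have hpos : 0 ≤ γA - γD + 2 * c := by linarith
  have hsq : γA - γD + 2 * c ≤ Real.sqrt ((γA + γD) ^ 2 + 4 * γR) :=
    (Real.le_sqrt hpos hx).mpr hkey
  linarith
end

section
/- Let A be an n×n symmetric positive definite real matrix and λ a real number not in the interval [λ_min(A), λ_max(A)]. Then for every nonzero vector s ∈ ℝ^n there exists a nonzero vector w ∈ ℝ^n such that s^T (A - λI)^{-1} s / (s^T s) = (w^T A w / (w^T w) - λ)^{-1}. -/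
open Matrix

theorem resolvent_rayleigh_quotient {n : ℕ} (hn : 0 < n)
    (A : Matrix (Fin n) (Fin n) ℝ) (hA : A.PosDef) (lam : ℝ)
    (hlam : lam ∉ Set.Icc (⨅ i, hA.1.eigenvalues i) (⨆ i, hA.1.eigenvalues i))
    (s : Fin n → ℝ) (hs : s ≠ 0) :
    ∃ w : Fin n → ℝ, w ≠ 0 ∧
      (s ⬝ᵥ (A - lam • 1)⁻¹.mulVec s) / (s ⬝ᵥ s) =
        ((w ⬝ᵥ A.mulVec w) / (w ⬝ᵥ w) - lam)⁻¹ := by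
  have hne : Nonempty (Fin n) := Fin.pos_iff_nonempty.mp hn
  set hH := hA.1 with hHdef
  set U : Matrix (Fin n) (Fin n) ℝ := (hH.eigenvectorUnitary : Matrix (Fin n) (Fin n) ℝ) with hUdef
  set μ : Fin n → ℝ := hH.eigenvalues with hμdef
  have hUsU : star U * U = 1 := Unitary.coe_star_mul_self _
  have hUUs : U * star U = 1 := Unitary.coe_mul_star_self _
  have hspec : A = U * diagonal μ * star U := by
    have := hH.spectral_theorem
    simpa using this
  -- dot products are preserved by U
  have hdot : ∀ x y : Fin n → ℝ, (U *ᵥ x) ⬝ᵥ (U *ᵥ y) = x ⬝ᵥ y := by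
    intro x y
    rw [dotProduct_mulVec, ← vecMul_transpose, vecMul_vecMul,
      ← conjTranspose_eq_transpose_of_trivial]
    rw [show Uᴴ = star U from rfl, hUsU, vecMul_one]
  -- sign of eigenvalues minus lam
  have hsign : (∀ k, lam < μ k) ∨ (∀ k, μ k < lam) := by
    rcases lt_or_ge lam (⨅ i, μ i) with h | h
    · exact Or.inl fun k =>
        h.trans_le (ciInf_le (Set.Finite.bddBelow (Set.finite_range μ)) k)
    · right
      intro k
      have h2 : ¬ lam ≤ ⨆ i, μ i := fun h2 => hlam ⟨h, h2⟩
      exact (le_ciSup (Set.Finite.bddAbove (Set.finite_range μ)) k).trans_lt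
        (lt_of_not_ge h2)
  have hμne : ∀ k, μ k - lam ≠ 0 := by
    intro k
    rcases hsign with h | h
    · exact sub_ne_zero.mpr (h k).ne'
    · exact sub_ne_zero.mpr (h k).ne
  set g : Fin n → ℝ := fun k => (μ k - lam)⁻¹ with hgdef
  have hg : ∀ k, g k ≠ 0 := fun k => inv_ne_zero (hμne k)
  -- inverse of the shifted matrix
  have hBdiag : A - lam • (1 : Matrix (Fin n) (Fin n) ℝ)
      = U * diagonal (fun k => μ k - lam) * star U := by
    have h1 : lam • (1 : Matrix (Fin n) (Fin n) ℝ)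
        = U * diagonal (fun _ => lam) * star U := by
      rw [← smul_one_eq_diagonal, Matrix.mul_smul, Matrix.smul_mul, mul_one, hUUs]
    have h2 : diagonal (fun k => μ k - lam)
        = diagonal μ - diagonal (fun _ => lam) := by
      ext k l
      rcases eq_or_ne k l with h | h
      · subst h; simp
      · simp [diagonal_apply_ne _ h]
    rw [hspec, h1, h2, Matrix.mul_sub, Matrix.sub_mul]
  have hinv : (A - lam • (1 : Matrix (Fin n) (Fin n) ℝ))⁻¹ = U * diagonal g * star U := by
    apply inv_eq_right_inv
    rw [hBdiag]
    have key : (diagonal fun k => μ k - lam) * diagonal g = 1 := by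
      rw [diagonal_mul_diagonal,
        show (fun k => (μ k - lam) * g k) = fun _ => (1 : ℝ) from
          funext fun k => mul_inv_cancel₀ (hμne k), diagonal_one]
    simp only [Matrix.mul_assoc]
    rw [← Matrix.mul_assoc (star U) U, hUsU, Matrix.one_mul,
      ← Matrix.mul_assoc (diagonal _) (diagonal g), key, Matrix.one_mul, hUUs]
  set c : Fin n → ℝ := star U *ᵥ s with hcdef
  have hc : s = U *ᵥ c := by
    rw [hcdef, mulVec_mulVec, hUUs, one_mulVec]
  have hc0 : c ≠ 0 := by
    intro h
    apply hs
    rw [hc, h, mulVec_zero]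
  -- numerator and denominator in eigencoordinates
  have hdiagdot : ∀ (f : Fin n → ℝ) (d : Fin n → ℝ),
      d ⬝ᵥ (diagonal f *ᵥ d) = ∑ k, f k * d k ^ 2 := by
    intro f d
    simp only [dotProduct, mulVec_diagonal]
    apply Finset.sum_congr rfl
    intro k _
    ring
  have hnum : s ⬝ᵥ (A - lam • (1 : Matrix (Fin n) (Fin n) ℝ))⁻¹.mulVec s
      = ∑ k, g k * c k ^ 2 := by
    rw [hinv, show (U * diagonal g * star U).mulVec s = U *ᵥ (diagonal g *ᵥ c) by
      rw [hcdef, ← mulVec_mulVec, ← mulVec_mulVec]]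
    rw [hc, hdot]
    exact hdiagdot g c
  have hden : s ⬝ᵥ s = ∑ k, c k ^ 2 := by
    conv_lhs => rw [hc, hdot]
    simp [dotProduct, sq]
  have hS : 0 < ∑ k, c k ^ 2 := by
    obtain ⟨k, hk⟩ := Function.ne_iff.mp hc0
    exact Finset.sum_pos' (fun k _ => sq_nonneg _)
      ⟨k, Finset.mem_univ k, sq_pos_iff.mpr hk⟩
  -- Rayleigh quotient for A of U *ᵥ d
  have hray : ∀ d : Fin n → ℝ,
      (U *ᵥ d) ⬝ᵥ A.mulVec (U *ᵥ d) = ∑ k, μ k * d k ^ 2 := by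
    intro d
    have : A.mulVec (U *ᵥ d) = U *ᵥ (diagonal μ *ᵥ d) := by
      rw [hspec, ← mulVec_mulVec, mulVec_mulVec d (star U) U, hUsU, one_mulVec,
        ← mulVec_mulVec]
    rw [this, hdot, hdiagdot]
  have hray2 : ∀ d : Fin n → ℝ, (U *ᵥ d) ⬝ᵥ (U *ᵥ d) = ∑ k, d k ^ 2 := by
    intro d
    rw [hdot]
    simp [dotProduct, sq]
  -- min and max of g
  obtain ⟨i, hi⟩ := Finite.exists_max g
  obtain ⟨j, hj⟩ := Finite.exists_min g
  set N := ∑ k, g k * c k ^ 2 with hNdef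
  set S := ∑ k, c k ^ 2 with hSdef
  have hN1 : g j * S ≤ N := by
    rw [hSdef, Finset.mul_sum]
    exact Finset.sum_le_sum fun k _ => mul_le_mul_of_nonneg_right (hj k) (sq_nonneg _)
  have hN2 : N ≤ g i * S := by
    rw [hSdef, Finset.mul_sum]
    exact Finset.sum_le_sum fun k _ => mul_le_mul_of_nonneg_right (hi k) (sq_nonneg _)
  set r := N / S with hrdef
  have hr1 : g j ≤ r := (le_div_iff₀ hS).mpr hN1
  have hr2 : r ≤ g i := (div_le_iff₀ hS).mpr hN2
  have hginv : ∀ k, (g k)⁻¹ = μ k - lam := fun k => inv_inv _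
  -- bounds on r⁻¹
  have hr0 : r ≠ 0 ∧ (μ i - lam ≤ r⁻¹ ∧ r⁻¹ ≤ μ j - lam) := by
    rcases hsign with h | h
    · have hgpos : ∀ k, 0 < g k := fun k => inv_pos.mpr (sub_pos.mpr (h k))
      have hrpos : 0 < r := lt_of_lt_of_le (hgpos j) hr1
      refine ⟨hrpos.ne', ?_, ?_⟩
      · rw [← hginv i]
        exact inv_anti₀ hrpos hr2
      · rw [← hginv j]
        exact inv_anti₀ (hgpos j) hr1
    · have hgneg : ∀ k, g k < 0 := fun k => inv_lt_zero.mpr (sub_neg.mpr (h k))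
      have hrneg : r < 0 := lt_of_le_of_lt hr2 (hgneg i)
      refine ⟨hrneg.ne, ?_, ?_⟩
      · rw [← hginv i]
        exact (inv_le_inv_of_neg (hgneg i) hrneg).mpr hr2
      · rw [← hginv j]
        exact (inv_le_inv_of_neg hrneg (hgneg j)).mpr hr1
  obtain ⟨hrne, hti, htj⟩ := hr0
  set t := lam + r⁻¹ with htdef
  have htij : μ i ≤ t ∧ t ≤ μ j := ⟨by rw [htdef]; linarith, by rw [htdef]; linarith⟩
  -- construct w
  by_cases hij : μ i = μ j
  · -- t = μ i, take an eigenvector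
    have htei : t = μ i := le_antisymm (hij ▸ htij.2) htij.1
    refine ⟨U *ᵥ Pi.single i 1, ?_, ?_⟩
    · intro h
      have h1 := hray2 (Pi.single i 1)
      rw [h, dotProduct_zero] at h1
      have h2 : ∑ k, (Pi.single i 1 : Fin n → ℝ) k ^ 2 = 1 := by
        simp [Pi.single_apply, Finset.sum_ite_eq']
      rw [h2] at h1
      exact one_ne_zero h1.symm
    · rw [hnum, hden, hray, hray2]
      have h2 : ∑ k, (Pi.single i 1 : Fin n → ℝ) k ^ 2 = 1 := by
        simp [Pi.single_apply, Finset.sum_ite_eq']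
      have h3 : ∑ k, μ k * (Pi.single i 1 : Fin n → ℝ) k ^ 2 = μ i := by
        simp [Pi.single_apply, mul_ite, Finset.sum_ite_eq']
      rw [h2, h3, div_one]
      rw [show μ i - lam = r⁻¹ by rw [← htei, htdef]; ring, inv_inv]
  · -- μ i < μ j, interpolate
    have hμij : μ i < μ j := lt_of_le_of_ne (le_trans htij.1 htij.2) hij
    have hijne : i ≠ j := fun h => hij (congrArg μ h)
    set θ := (t - μ i) / (μ j - μ i) with hθdef
    have hθ0 : 0 ≤ θ := div_nonneg (by linarith [htij.1]) (by linarith)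
    have hθ1 : θ ≤ 1 := (div_le_one (by linarith)).mpr (by linarith [htij.2])
    set d : Fin n → ℝ := fun k =>
      if k = i then Real.sqrt (1 - θ) else if k = j then Real.sqrt θ else 0 with hddef
    have hsum : ∀ f : Fin n → ℝ, ∑ k, f k * d k ^ 2 = f i * (1 - θ) + f j * θ := by
      intro f
      have hsub : ({i, j} : Finset (Fin n)) ⊆ Finset.univ := Finset.subset_univ _
      rw [← Finset.sum_subset hsub]
      · rw [Finset.sum_pair hijne]
        have hdi : d i = Real.sqrt (1 - θ) := by simp [hddef]
        have hdj : d j = Real.sqrt θ := by simp [hddef, hijne.symm]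
        rw [hdi, hdj, Real.sq_sqrt (by linarith : (0:ℝ) ≤ 1 - θ), Real.sq_sqrt hθ0]
      · intro k _ hk
        simp only [Finset.mem_insert, Finset.mem_singleton, not_or] at hk
        rw [hddef]
        simp only [if_neg hk.1, if_neg hk.2]
        ring
    have hd2 : ∑ k, d k ^ 2 = 1 := by
      have := hsum (fun _ => 1)
      simpa using this.trans (by ring)
    refine ⟨U *ᵥ d, ?_, ?_⟩
    · intro h
      have h1 := hray2 d
      rw [h, dotProduct_zero, hd2] at h1
      exact one_ne_zero h1.symm
    · rw [hnum, hden, hray, hray2, hd2, div_one]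
      have hμd : ∑ k, μ k * d k ^ 2 = t := by
        rw [hsum μ]
        have hne' : μ j - μ i ≠ 0 := sub_ne_zero.mpr hμij.ne'
        have hθmul : θ * (μ j - μ i) = t - μ i := by
          rw [hθdef]; exact div_mul_cancel₀ _ hne'
        linear_combination hθmul
      rw [hμd, show t - lam = r⁻¹ by rw [htdef]; ring, inv_inv]
end

section
/- Let γA, γE, γK, γR, γD be positive reals with π(λ) = λ³ - (γA + γE - γD)λ² - (γR + γK + γEγD + γAγD - γEγA)λ + (γAγK + γEγR + γEγAγD). If μ is a negative root of π, then μ ≥ s-, where s- = (-γD - sqrt(γD² + 4(γR + γK)))/2 is the negative root of r(λ) = λ(λ² + γD·λ - γR - γK). In particular μ ≥ -γD - sqrt(γR + γK). -/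
theorem negative_root_of_pi_bound (γA γE γK γR γD : ℝ)
    (hA : 0 < γA) (hE : 0 < γE) (hK : 0 < γK) (hR : 0 < γR) (hD : 0 < γD)
    (μ : ℝ) (hμ : μ < 0)
    (hroot : μ ^ 3 - (γA + γE - γD) * μ ^ 2 -
      (γR + γK + γE * γD + γA * γD - γE * γA) * μ +
      (γA * γK + γE * γR + γE * γA * γD) = 0) :
    (-γD - Real.sqrt (γD ^ 2 + 4 * (γR + γK))) / 2 ≤ μ ∧
    -γD - Real.sqrt (γR + γK) ≤ μ := by
  have key : μ ^ 2 + γD * μ ≤ γR + γK := by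
    by_contra h
    push_neg at h
    have hDneg : μ + γD < 0 := by nlinarith
    -- qA(μ) = γK - (μ - γE)(μ + γD) < 0
    have hqA : γK - (μ - γE) * (μ + γD) < 0 := by nlinarith [mul_pos hE (neg_pos.2 hDneg)]
    -- qE(μ) = -((μ + γD)(μ - γA) - γR) < 0
    have hqE : (μ + γD) * (μ - γA) - γR > 0 := by nlinarith [mul_pos hA (neg_pos.2 hDneg)]
    -- r(μ) < 0
    have hr : μ * (μ ^ 2 + γD * μ - γR - γK) < 0 :=
      mul_neg_of_neg_of_pos hμ (by linarith)
    nlinarith [mul_pos hA (neg_pos.2 hqA), mul_pos hE hqE]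
  constructor
  · set s := Real.sqrt (γD ^ 2 + 4 * (γR + γK)) with hs
    have hs0 : 0 ≤ s := Real.sqrt_nonneg _
    have hs2 : s ^ 2 = γD ^ 2 + 4 * (γR + γK) := Real.sq_sqrt (by positivity)
    nlinarith [sq_nonneg (2 * μ + γD + s)]
  · set t := Real.sqrt (γR + γK) with ht
    have ht0 : 0 ≤ t := Real.sqrt_nonneg _
    have ht2 : t ^ 2 = γR + γK := Real.sq_sqrt (by positivity)
    nlinarith [sq_nonneg (μ + γD + t), mul_nonneg hD.le ht0]
end

section
/- Let γA, γS, γD be reals with 0 < γA, 0 < γS, 0 ≤ γD, γS = γR + γD for some γR > 0, and γA ≤ γ_max^A, γD ≤ γ_max^D, γR ≥ γ_min^R > 0. If ζ is real with either 0 < ζ < min{γA, γ_min^R/(γ_max^A + γ_min^R + γ_max^D)} or ζ ≥ γ_max^A + γS, then the scalar quantity q(ζ) = (1-ζ)·γS/(ζ - γA) - γD·(1-γA)/(ζ - γA) + ζ is nonzero. -/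
theorem scalar_lemma4 (γA γS γD γR γAmax γDmax γRmin : ℝ)
    (hA : 0 < γA) (hS : 0 < γS) (hD : 0 ≤ γD) (hR : 0 < γR)
    (hsum : γS = γR + γD)
    (hAmax : γA ≤ γAmax) (hDmax : γD ≤ γDmax)
    (hRmin : 0 < γRmin) (hRmin' : γRmin ≤ γR)
    (ζ : ℝ)
    (hζ : (0 < ζ ∧ ζ < min γA (γRmin / (γAmax + γRmin + γDmax))) ∨
      γAmax + γS ≤ ζ) :
    (1 - ζ) * γS / (ζ - γA) - γD * (1 - γA) / (ζ - γA) + ζ ≠ 0 := by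
  have hd : ζ - γA ≠ 0 := by
    rcases hζ with ⟨h0, hlt⟩ | hge
    · have := lt_of_lt_of_le hlt (min_le_left _ _)
      intro h; nlinarith
    · intro h; nlinarith
  have hh : ζ ^ 2 - (γA + γS) * ζ + γR + γD * γA > 0 := by
    rcases hζ with ⟨h0, hlt⟩ | hge
    · have hD1 : 0 < γAmax + γRmin + γDmax := by nlinarith
      have h1 : ζ < γRmin / (γAmax + γRmin + γDmax) :=
        lt_of_lt_of_le hlt (min_le_right _ _)
      have h2 : ζ * (γAmax + γRmin + γDmax) < γRmin :=
        (lt_div_iff₀ hD1).mp h1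
      have h3 : ζ * (γAmax + γR + γDmax) < γR := by nlinarith
      nlinarith
    · nlinarith
  intro h
  apply hh.ne'
  have : (1 - ζ) * γS / (ζ - γA) - γD * (1 - γA) / (ζ - γA) + ζ
      = (ζ ^ 2 - (γA + γS) * ζ + γR + γD * γA) / (ζ - γA) := by
    field_simp
    nlinarith [sq_nonneg ζ]
  rw [this] at h
  exact (div_eq_zero_iff.mp h).resolve_right hd
end
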